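/- For a real matrix F_d ∈ ℝ^{2n×2n} of the block form F_d = [[0, I], [−I, J̄ − R̄]] with J̄ skew-symmetric and R̄ symmetric positive definite, F_d is Hurwitz: all its eigenvalues have strictly negative real part. -/

import Mathlib

open Matrix

lemma re_dot {n : ℕ} (M : Matrix (Fin n) (Fin n) ℝ) (x : Fin n → ℂ) :
    (star x ⬝ᵥ ((M.map Complex.ofReal) *ᵥ x)).re
      = ∑ i, ∑ j, M i j * ((x i).re * (x j).re + (x i).im * (x j).im) := by
  simp only [dotProduct, mulVec, Matrix.map_apply, Pi.star_apply, Complex.re_sum,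
    Finset.mul_sum, dotProduct, Complex.mul_re, Complex.mul_im, Complex.ofReal_re,
    Complex.ofReal_im, RCLike.star_def, Complex.conj_re, Complex.conj_im]
  refine Finset.sum_congr rfl fun i _ => Finset.sum_congr rfl fun j _ => by ring

lemma re_dot_skew {n : ℕ} (J : Matrix (Fin n) (Fin n) ℝ) (hJ : Jᵀ = -J) (x : Fin n → ℂ) :
    (star x ⬝ᵥ ((J.map Complex.ofReal) *ᵥ x)).re = 0 := by
  have hJ' : ∀ i j, J j i = -(J i j) := by
    intro i j
    have := congrFun (congrFun hJ i) j
    simpa [Matrix.transpose_apply] using this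
  rw [re_dot]
  have h : (∑ i, ∑ j, J i j * ((x i).re * (x j).re + (x i).im * (x j).im))
      = -(∑ i, ∑ j, J i j * ((x i).re * (x j).re + (x i).im * (x j).im)) := by
    conv_lhs => rw [Finset.sum_comm]
    rw [← Finset.sum_neg_distrib]
    refine Finset.sum_congr rfl fun i _ => ?_
    rw [← Finset.sum_neg_distrib]
    refine Finset.sum_congr rfl fun j _ => ?_
    rw [hJ' j i]; ring
  linarith

lemma re_dot_posdef {n : ℕ} (R : Matrix (Fin n) (Fin n) ℝ) (hR : R.PosDef)
    (x : Fin n → ℂ) (hx : x ≠ 0) :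
    0 < (star x ⬝ᵥ ((R.map Complex.ofReal) *ᵥ x)).re := by
  rw [re_dot]
  set u : Fin n → ℝ := fun i => (x i).re with hu
  set w : Fin n → ℝ := fun i => (x i).im with hw
  have key : (∑ i, ∑ j, R i j * (u i * u j + w i * w j))
      = star u ⬝ᵥ (R *ᵥ u) + star w ⬝ᵥ (R *ᵥ w) := by
    simp only [dotProduct, mulVec, Pi.star_apply, star_trivial, Finset.mul_sum,
      ← Finset.sum_add_distrib]
    refine Finset.sum_congr rfl fun i _ => Finset.sum_congr rfl fun j _ => by ring
  rw [key]
  have huw : u ≠ 0 ∨ w ≠ 0 := by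
    by_contra h
    push_neg at h
    apply hx
    funext i
    have h1 := congrFun h.1 i
    have h2 := congrFun h.2 i
    exact Complex.ext (by simpa [hu] using h1) (by simpa [hw] using h2)
  rcases huw with h | h
  · have := hR.dotProduct_mulVec_pos h
    have h2 := hR.posSemidef.dotProduct_mulVec_nonneg w
    linarith
  · have := hR.dotProduct_mulVec_pos h
    have h2 := hR.posSemidef.dotProduct_mulVec_nonneg u
    linarith

/-- The block matrix F_d = [[0, I], [−I, J̄ − R̄]] with J̄
skew-symmetric and R̄ symmetric positive definite is Hurwitz. -/
theorem stmt14 {n : ℕ} (J R : Matrix (Fin n) (Fin n) ℝ)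
    (hJ : Jᵀ = -J) (hR : R.PosDef)
    (Fd : Matrix (Fin n ⊕ Fin n) (Fin n ⊕ Fin n) ℝ)
    (hFd : Fd = Matrix.fromBlocks 0 1 (-1) (J - R)) :
    ∀ μ ∈ spectrum ℂ (Fd.map Complex.ofReal), μ.re < 0 := by
  intro μ hμ
  subst hFd
  set Jc := J.map Complex.ofReal with hJc
  set Rc := R.map Complex.ofReal with hRc
  have hmap : (Matrix.fromBlocks (0 : Matrix (Fin n) (Fin n) ℝ) 1 (-1) (J - R)).map
      Complex.ofReal = Matrix.fromBlocks 0 1 (-1) (Jc - Rc) := by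
    have h0 : (0 : Matrix (Fin n) (Fin n) ℝ).map Complex.ofReal = 0 := by
      ext i j; simp
    have h1 : (1 : Matrix (Fin n) (Fin n) ℝ).map Complex.ofReal = 1 := by
      ext i j; simp [Matrix.one_apply]; split <;> simp
    have hneg : (-1 : Matrix (Fin n) (Fin n) ℝ).map Complex.ofReal = -1 := by
      ext i j; simp [Matrix.one_apply]; split <;> simp
    have hsub : (J - R).map Complex.ofReal = Jc - Rc := by
      ext i j; simp [Matrix.map_apply, Matrix.sub_apply, hJc, hRc]
    rw [Matrix.fromBlocks_map, h0, h1, hneg, hsub]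
  rw [hmap] at hμ
  set M := Matrix.fromBlocks (0 : Matrix (Fin n) (Fin n) ℂ) 1 (-1) (Jc - Rc) with hM
  -- get an eigenvector
  rw [← AlgEquiv.spectrum_eq (Matrix.toLinAlgEquiv' (R := ℂ) (n := Fin n ⊕ Fin n)),
    ← Module.End.hasEigenvalue_iff_mem_spectrum] at hμ
  obtain ⟨v, hv⟩ := hμ.exists_hasEigenvector
  have hv0 : v ≠ 0 := hv.right
  have hveq : M *ᵥ v = μ • v := hv.apply_eq_smul
  set x : Fin n → ℂ := fun i => v (Sum.inl i) with hx
  set y : Fin n → ℂ := fun i => v (Sum.inr i) with hy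
  have hvsum : v = Sum.elim x y := by funext i; cases i <;> rfl
  rw [hvsum, Matrix.fromBlocks_mulVec] at hveq
  have e1 : (0 : Matrix (Fin n) (Fin n) ℂ) *ᵥ x + 1 *ᵥ y = μ • x := by
    have := congrFun hveq
    funext i; simpa using this (Sum.inl i)
  have e2 : (-1 : Matrix (Fin n) (Fin n) ℂ) *ᵥ x + (Jc - Rc) *ᵥ y = μ • y := by
    have := congrFun hveq
    funext i; simpa using this (Sum.inr i)
  simp only [Matrix.zero_mulVec, Matrix.one_mulVec, zero_add] at e1
  -- e1 : y = μ • x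
  have hx0 : x ≠ 0 := by
    intro h
    apply hv0
    rw [hvsum, h]
    have : y = 0 := by rw [e1, h, smul_zero]
    rw [this]
    funext i; cases i <;> rfl
  have e2' : -x + μ • ((Jc - Rc) *ᵥ x) = (μ * μ) • x := by
    have := e2
    rw [e1] at this
    simpa [Matrix.neg_mulVec, Matrix.one_mulVec, Matrix.mulVec_smul, smul_smul] using this
  -- dot with star x
  set a : ℂ := star x ⬝ᵥ x with ha
  set q : ℂ := star x ⬝ᵥ ((Jc - Rc) *ᵥ x) with hq
  have main : -a + μ * q = (μ * μ) * a := by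
    have := congrArg (fun z => star x ⬝ᵥ z) e2'
    simpa [dotProduct_add, dotProduct_neg, dotProduct_smul, smul_eq_mul, ha, hq] using this
  -- facts about a
  have haval : a = ((∑ i, Complex.normSq (x i) : ℝ) : ℂ) := by
    simp [ha, dotProduct, Complex.normSq_eq_conj_mul_self]
  have haim : a.im = 0 := by rw [haval]; simp
  have hare : 0 < a.re := by
    rw [haval]
    simp only [Complex.ofReal_re]
    have hnn : ∀ i ∈ Finset.univ, 0 ≤ Complex.normSq (x i) := fun i _ => Complex.normSq_nonneg _
    rcases Function.ne_iff.mp hx0 with ⟨i, hi⟩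
    exact Finset.sum_pos' hnn ⟨i, Finset.mem_univ i, Complex.normSq_pos.mpr hi⟩
  -- facts about q
  have hqre : q.re < 0 := by
    have hsplit : q = star x ⬝ᵥ (Jc *ᵥ x) - star x ⬝ᵥ (Rc *ᵥ x) := by
      rw [hq, Matrix.sub_mulVec, dotProduct_sub]
    have h1 : (star x ⬝ᵥ (Jc *ᵥ x)).re = 0 := re_dot_skew J hJ x
    have h2 : 0 < (star x ⬝ᵥ (Rc *ᵥ x)).re := re_dot_posdef R hR x hx0
    rw [hsplit]
    simp only [Complex.sub_re, h1]
    linarith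
  -- μ ≠ 0
  have hμ0 : μ ≠ 0 := by
    intro h
    rw [h] at main
    simp at main
    rw [main] at hare
    simp at hare
  -- divide: a * (μ + μ⁻¹) = q
  have hdiv : a * (μ + μ⁻¹) = q := by
    have h1 : μ * (a * (μ + μ⁻¹)) = μ * q := by
      field_simp
      linear_combination -main
    exact mul_left_cancel₀ hμ0 h1
  have hre : a.re * (μ.re + μ⁻¹.re) = q.re := by
    have := congrArg Complex.re hdiv
    simpa [Complex.mul_re, Complex.add_re, haim] using this
  rw [Complex.inv_re] at hre
  have hns : 0 < Complex.normSq μ := Complex.normSq_pos.mpr hμ0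
  by_contra hcon
  push_neg at hcon
  have : 0 ≤ μ.re + μ.re / Complex.normSq μ := by positivity
  nlinarith
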